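/- Let (Ω, P) be a probability space, let ω be a nonnegative random variable, x and x̂ real random variables with ω·(x − x̂)² integrable and ω·(x − x̂) integrable, and let r be a square-integrable random variable independent of the random vector (ω, x, x̂) with E[r] = 0. Let a, b, y be real numbers with b ≠ 0, and set v* = (y − a·x̂)/b. Then E[ω·(a·x + b·v* + r − y)²] = a²·E[ω·(x − x̂)²] + E[ω]·E[r²]. -/

import Mathlib

open MeasureTheory ProbabilityTheory

/-- The equivalence step in Proposition 1: under the optimal control
`v* = (y − a·x̂)/b`, with zero-mean square-integrable noise `r` independent of
`(w, x, x̂)`, the weighted squared tracking error satisfies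
`E[w·(a·x + b·v* + r − y)²] = a²·E[w·(x − x̂)²] + E[w]·E[r²]`. -/
theorem tracking_error_equivalence {Ω : Type*} [MeasureSpace Ω]
    [IsProbabilityMeasure (ℙ : Measure Ω)]
    (w x xhat r : Ω → ℝ) (hw0 : ∀ ω, 0 ≤ w ω) (hwInt : Integrable w)
    (h1 : Integrable (fun ω => w ω * (x ω - xhat ω) ^ 2))
    (h2 : Integrable (fun ω => w ω * (x ω - xhat ω)))
    (hr : MemLp r 2 ℙ)
    (hindep : IndepFun (fun ω => (w ω, x ω, xhat ω)) r)
    (hrmean : (∫ ω, r ω) = 0)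
    (a b y : ℝ) (hb : b ≠ 0) (vstar : Ω → ℝ)
    (hvstar : ∀ ω, vstar ω = (y - a * xhat ω) / b) :
    (∫ ω, w ω * (a * x ω + b * vstar ω + r ω - y) ^ 2)
      = a ^ 2 * (∫ ω, w ω * (x ω - xhat ω) ^ 2) + (∫ ω, w ω) * ∫ ω, r ω ^ 2 := by
  have hrInt : Integrable r := hr.integrable one_le_two
  have hr2Int : Integrable (fun ω => r ω ^ 2) := by
    have := hr.integrable_sq
    simpa [sq] using this
  have hI1 : IndepFun (fun ω => w ω * (x ω - xhat ω)) r := by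
    have : Measurable (fun p : ℝ × ℝ × ℝ => p.1 * (p.2.1 - p.2.2)) := by fun_prop
    exact hindep.comp this measurable_id
  have hI2 : IndepFun w (fun ω => r ω ^ 2) := by
    have h1m : Measurable (fun p : ℝ × ℝ × ℝ => p.1) := measurable_fst
    have h2m : Measurable (fun t : ℝ => t ^ 2) := by fun_prop
    exact hindep.comp h1m h2m
  have hcross : Integrable (fun ω => w ω * (x ω - xhat ω) * r ω) :=
    hI1.integrable_mul h2 hrInt
  have hwr2 : Integrable (fun ω => w ω * r ω ^ 2) := hI2.integrable_mul hwInt hr2Int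
  have key : ∀ ω, w ω * (a * x ω + b * vstar ω + r ω - y) ^ 2
      = a ^ 2 * (w ω * (x ω - xhat ω) ^ 2) + 2 * a * (w ω * (x ω - xhat ω) * r ω)
        + w ω * r ω ^ 2 := by
    intro ω
    rw [hvstar ω]
    field_simp
    ring
  calc (∫ ω, w ω * (a * x ω + b * vstar ω + r ω - y) ^ 2)
      = ∫ ω, (a ^ 2 * (w ω * (x ω - xhat ω) ^ 2)
          + 2 * a * (w ω * (x ω - xhat ω) * r ω) + w ω * r ω ^ 2) := by
        simp_rw [key]
    _ = a ^ 2 * (∫ ω, w ω * (x ω - xhat ω) ^ 2)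
          + 2 * a * (∫ ω, w ω * (x ω - xhat ω) * r ω) + ∫ ω, w ω * r ω ^ 2 := by
        have hA : Integrable (fun ω => a ^ 2 * (w ω * (x ω - xhat ω) ^ 2)) :=
          h1.const_mul (a ^ 2)
        have hB : Integrable (fun ω => 2 * a * (w ω * (x ω - xhat ω) * r ω)) :=
          hcross.const_mul (2 * a)
        have hAB : Integrable (fun ω => a ^ 2 * (w ω * (x ω - xhat ω) ^ 2)
            + 2 * a * (w ω * (x ω - xhat ω) * r ω)) := hA.add hB
        rw [integral_add hAB hwr2, integral_add hA hB,
          integral_const_mul, integral_const_mul]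
    _ = a ^ 2 * (∫ ω, w ω * (x ω - xhat ω) ^ 2) + (∫ ω, w ω) * ∫ ω, r ω ^ 2 := by
        have e1 : (∫ ω, w ω * (x ω - xhat ω) * r ω) = 0 := by
          have := hI1.integral_mul_eq_mul_integral h2.aestronglyMeasurable hrInt.aestronglyMeasurable
          simpa [Pi.mul_apply, hrmean] using this
        have e2 : (∫ ω, w ω * r ω ^ 2) = (∫ ω, w ω) * ∫ ω, r ω ^ 2 := by
          have := hI2.integral_mul_eq_mul_integral hwInt.aestronglyMeasurable hr2Int.aestronglyMeasurable
          simpa [Pi.mul_apply] using this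
        rw [e1, e2]; ring
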